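/- Metric-DP of a finite-output mechanism built from a triangle-inequality density bound: let W be a finite set, φ : W → X an embedding into a metric space X, ε ≥ 0, and M a mechanism with output probabilities Pr[M(w) = ŵ] = Σ_{z ∈ Z} q_w(z)·s(z, ŵ) for a finite noise support Z, where q_w(z) = exp(-ε·dist(z, φ(w)))·c(z) with c(z) ≥ 0 a w-independent normalizing weight, and s(z, ŵ) ∈ [0,1] is a w-independent selection rule. Then for all w, w', ŵ: Pr[M(w) = ŵ] ≤ exp(ε·dist(φ(w), φ(w'))) · Pr[M(w') = ŵ]. -/
import Mathlib


theorem stmt_7 {W : Type*} [Fintype W] {X : Type*} [MetricSpace X]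
    (φ : W → X) (ε : ℝ) (hε : 0 ≤ ε)
    (Z : Finset X) (c : X → ℝ) (hc : ∀ z, 0 ≤ c z)
    (s : X → W → ℝ) (hs0 : ∀ z what, 0 ≤ s z what) (hs1 : ∀ z what, s z what ≤ 1)
    (Pr : W → W → ℝ)
    (hPr : ∀ w what, Pr w what = ∑ z ∈ Z, Real.exp (-(ε * dist z (φ w))) * c z * s z what)
    (w w' what : W) :
    Pr w what ≤ Real.exp (ε * dist (φ w) (φ w')) * Pr w' what := by
  rw [hPr, hPr, Finset.mul_sum]
  apply Finset.sum_le_sum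
  intro z _
  have h1 : Real.exp (-(ε * dist z (φ w))) ≤
      Real.exp (ε * dist (φ w) (φ w')) * Real.exp (-(ε * dist z (φ w'))) := by
    rw [← Real.exp_add]
    apply Real.exp_le_exp.mpr
    have := dist_triangle z (φ w') (φ w)
    have hd : dist z (φ w') ≤ dist z (φ w) + dist (φ w) (φ w') :=
      dist_triangle z (φ w) (φ w')
    nlinarith
  calc Real.exp (-(ε * dist z (φ w))) * c z * s z what
      ≤ Real.exp (ε * dist (φ w) (φ w')) * Real.exp (-(ε * dist z (φ w'))) * c z * s z what := by
        apply mul_le_mul_of_nonneg_right _ (hs0 z what)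
        exact mul_le_mul_of_nonneg_right h1 (hc z)
    _ = Real.exp (ε * dist (φ w) (φ w')) * (Real.exp (-(ε * dist z (φ w'))) * c z * s z what) := by ring
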